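/- For all integers m ≥ 0, k ≥ 1 and every real number x, E_{m,q}^{(0,k)}(x) = Σ_{i=0}^{m} C(m,i) E_{i,q}^{(0,k)} · [x]_q^{m−i} · q^{ix}. -/

import Mathlib

open Finset

/-- The q-number `[x]_q = (1 - q^x)/(1 - q)`, with `q^x = exp (x * log q)` (rpow). -/
noncomputable def qNum (q x : ℝ) : ℝ := (1 - q ^ x) / (1 - q)

/-- `[l]_{-q} = (1 - (-q)^l)/(1 + q)` for a natural number `l`. -/
noncomputable def qNumNeg (q : ℝ) (l : ℕ) : ℝ := (1 - (-q) ^ l) / (1 + q)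

/-- The higher-order q-Euler polynomial
`E_{m,q}^{(h,k)}(x) = ((1+q)^k/(1-q)^m) * Σ_{j=0}^m C(m,j) (-1)^j q^{jx} / Π_{i=0}^{k-1} (1 + q^{h+j-i})`. -/
noncomputable def qE (q : ℝ) (h : ℤ) (k m : ℕ) (x : ℝ) : ℝ :=
  ((1 + q) ^ k / (1 - q) ^ m) *
    ∑ j ∈ Finset.range (m + 1),
      (m.choose j : ℝ) * (-1) ^ j * q ^ ((j : ℝ) * x) /
        ∏ i ∈ Finset.range k, (1 + q ^ ((h : ℝ) + (j : ℝ) - (i : ℝ)))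

/-- Binomial transform identity: if `f i = Σ_{j≤i} C(i,j) g j`, then
`Σ_i C(m,i) f i u^i (1-u)^{m-i} = Σ_j C(m,j) g j u^j`. -/
lemma key_swap (m : ℕ) (u : ℝ) (g : ℕ → ℝ) :
    ∑ i ∈ Finset.range (m+1), (m.choose i : ℝ) *
        (∑ j ∈ Finset.range (i+1), (i.choose j : ℝ) * g j) * u^i * (1-u)^(m-i)
    = ∑ j ∈ Finset.range (m+1), (m.choose j : ℝ) * g j * u^j := by
  have h1 : ∀ i ∈ Finset.range (m+1),
      (m.choose i : ℝ) * (∑ j ∈ Finset.range (i+1), (i.choose j : ℝ) * g j) * u^i * (1-u)^(m-i)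
      = ∑ j ∈ Finset.range (i+1),
          (m.choose i : ℝ) * (i.choose j : ℝ) * g j * u^i * (1-u)^(m-i) := by
    intro i _
    rw [Finset.mul_sum, Finset.sum_mul, Finset.sum_mul]
    exact Finset.sum_congr rfl fun j _ => by ring
  rw [Finset.sum_congr rfl h1]
  rw [Finset.sum_comm' (t' := Finset.range (m+1)) (s' := fun j => Finset.Ico j (m+1))
    (fun i j => by simp [Nat.lt_succ_iff]; omega)]
  refine Finset.sum_congr rfl fun j hj => ?_
  have hjm : j ≤ m := by simpa [Nat.lt_succ_iff] using hj
  rw [Finset.sum_Ico_eq_sum_range]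
  have hrange : m + 1 - j = (m - j) + 1 := by omega
  rw [hrange]
  have h2 : ∀ t ∈ Finset.range ((m-j)+1),
      (m.choose (j+t) : ℝ) * ((j+t).choose j : ℝ) * g j * u^(j+t) * (1-u)^(m-(j+t))
      = ((m.choose j : ℝ) * g j * u^j) * (u^t * (1-u)^((m-j)-t) * ((m-j).choose t : ℝ)) := by
    intro t ht
    have htm : t ≤ m - j := by simpa [Nat.lt_succ_iff] using ht
    have hjt : j + t ≤ m := by omega
    have hch : (m.choose (j+t) : ℝ) * ((j+t).choose j : ℝ)
        = (m.choose j : ℝ) * ((m-j).choose t : ℝ) := by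
      have := Nat.choose_mul (n := m) (Nat.le_add_right j t)
      have h3 : j + t - j = t := by omega
      rw [h3] at this
      exact_mod_cast congrArg (Nat.cast : ℕ → ℝ) this
    have hsub : m - (j+t) = (m-j) - t := by omega
    rw [hsub, pow_add, hch]
    ring
  rw [Finset.sum_congr rfl h2, ← Finset.mul_sum, ← add_pow]
  simp

theorem stmt_3 (q : ℝ) (hq : 0 < q) (hq1 : q ≠ 1) (m k : ℕ) (hk : 1 ≤ k) (x : ℝ) :
    qE q 0 k m x =
      ∑ i ∈ Finset.range (m + 1),
        (m.choose i : ℝ) * qE q 0 k i 0 * qNum q x ^ (m - i) * q ^ ((i : ℝ) * x) := by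
  set u : ℝ := q ^ x with hu
  have h1q : (1 : ℝ) - q ≠ 0 := by
    intro h; apply hq1; linarith
  set P : ℕ → ℝ := fun j => ∏ i ∈ Finset.range k, (1 + q ^ (((0:ℤ) : ℝ) + (j : ℝ) - (i : ℝ))) with hP
  set g : ℕ → ℝ := fun j => (-1) ^ j / P j with hg
  have hux : ∀ j : ℕ, q ^ ((j : ℝ) * x) = u ^ j := by
    intro j
    rw [mul_comm, Real.rpow_mul hq.le, Real.rpow_natCast]
  have hqE : ∀ n : ℕ, qE q 0 k n 0 =
      ((1 + q) ^ k / (1 - q) ^ n) * ∑ j ∈ Finset.range (n+1), (n.choose j : ℝ) * g j := by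
    intro n
    unfold qE
    congr 1
    refine Finset.sum_congr rfl fun j _ => ?_
    rw [mul_zero, Real.rpow_zero, hg]
    simp only [hP]
    ring
  have hqEx : qE q 0 k m x =
      ((1 + q) ^ k / (1 - q) ^ m) * ∑ j ∈ Finset.range (m+1), (m.choose j : ℝ) * g j * u ^ j := by
    unfold qE
    congr 1
    refine Finset.sum_congr rfl fun j _ => ?_
    rw [hux j, hg]
    simp only [hP]
    ring
  have hqNum : qNum q x = (1 - u) / (1 - q) := rfl
  have hterm : ∀ i ∈ Finset.range (m+1),
      (m.choose i : ℝ) * qE q 0 k i 0 * qNum q x ^ (m - i) * q ^ ((i : ℝ) * x)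
      = ((1 + q) ^ k / (1 - q) ^ m) *
          ((m.choose i : ℝ) * (∑ j ∈ Finset.range (i+1), (i.choose j : ℝ) * g j)
            * u^i * (1-u)^(m-i)) := by
    intro i hi
    have him : i ≤ m := by simpa [Nat.lt_succ_iff] using hi
    rw [hqE i, hqNum, hux i, div_pow]
    have hpow : (1-q)^i * (1-q)^(m-i) = (1-q)^m := by
      rw [← pow_add, Nat.add_sub_cancel' him]
    rw [← hpow]
    field_simp
  rw [Finset.sum_congr rfl hterm, ← Finset.mul_sum, key_swap, hqEx]
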